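/- arXiv:2102.01104 — 4 statements merged into one kernel-verified Lean document; each statement's English description precedes it below -/
import Mathlib

section
/- Let L ⊣ F ⊣ R be a string of adjoint functors. If L is fully faithful, then R is fully faithful. -/
open CategoryTheory

universe v1 v2 u1 u2

/-- In a string of adjoint functors L ⊣ F ⊣ R, if L is fully
faithful then R is fully faithful. -/
theorem right_fullyFaithful_of_left {M : Type u1} {N : Type u2}
    [Category.{v1} M] [Category.{v2} N]
    (F : N ⥤ M) (L R : M ⥤ N) (adj1 : L ⊣ F) (adj2 : F ⊣ R)
    [L.Full] [L.Faithful] :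
    R.Full ∧ R.Faithful := by
  have h := (Adjunction.Triple.mk adj1 adj2).fullyFaithfulEquiv (Functor.FullyFaithful.ofFullyFaithful L)
  exact ⟨h.full, h.faithful⟩
end

section
/- Let L ⊣ F ⊣ R be a string of adjoint functors in which L is fully faithful. Then the composite natural transformation F ⟹ F R F ⟹ F (whiskered unit of F ⊣ R followed by whiskered counit of F ⊣ R), which equals the identity of F, factors through natural isomorphisms; in particular F η' : F ⟹ F R F is a natural isomorphism. -/
open CategoryTheory

universe v1 v2 u1 u2

/-- If L is fully faithful, then the whiskered unit
F η' : F ⟹ F R F of F ⊣ R is a natural isomorphism. -/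
theorem whiskered_unit_isIso_of_left_fullyFaithful {M : Type u1} {N : Type u2}
    [Category.{v1} M] [Category.{v2} N]
    (F : N ⥤ M) (L R : M ⥤ N) (adj1 : L ⊣ F) (adj2 : F ⊣ R)
    [L.Full] [L.Faithful] :
    IsIso (Functor.whiskerRight adj2.unit F) := by
  have hu : IsIso adj1.unit := adj1.unit_isIso_of_L_fully_faithful
  have hc : IsIso adj2.counit := ((Adjunction.Triple.mk adj1 adj2).isIso_unit_iff_isIso_counit).mp hu
  have : ∀ X : N, IsIso ((Functor.whiskerRight adj2.unit F).app X) := by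
    intro X
    have hcX : IsIso (adj2.counit.app (F.obj X)) := inferInstance
    have h : (Functor.whiskerRight adj2.unit F).app X ≫ adj2.counit.app (F.obj X) = 𝟙 _ := by
      simp only [Functor.whiskerRight_app]; exact adj2.left_triangle_components X
    have : IsIso ((Functor.whiskerRight adj2.unit F).app X ≫ adj2.counit.app (F.obj X)) := by
      rw [h]; infer_instance
    exact IsIso.of_isIso_comp_right _ (adj2.counit.app (F.obj X))
  exact NatIso.isIso_of_isIso_app _
end

section
/- Let L ⊣ F ⊣ R be a string of adjoint functors in which R is fully faithful. Then the whiskered transformation η F : F ⟹ F L F (unit of L ⊣ F whiskered by F) is a natural isomorphism. -/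
open CategoryTheory

universe v1 v2 u1 u2

/-- If R is fully faithful, then the whiskered unit
η F : F ⟹ F L F of L ⊣ F is a natural isomorphism. -/
theorem whiskered_unit_isIso_of_right_fullyFaithful {M : Type u1} {N : Type u2}
    [Category.{v1} M] [Category.{v2} N]
    (F : N ⥤ M) (L R : M ⥤ N) (adj1 : L ⊣ F) (adj2 : F ⊣ R)
    [R.Full] [R.Faithful] :
    IsIso (Functor.whiskerLeft F adj1.unit) := by
  haveI : IsIso adj2.counit := adj2.counit_isIso_of_R_fully_faithful
  haveI : IsIso adj1.unit := (Adjunction.Triple.isIso_unit_iff_isIso_counit ⟨adj1, adj2⟩).mpr inferInstance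
  infer_instance
end

section
/- Let L ⊣ F ⊣ R be a string of adjoint functors. The whiskered counit F ε : F L F ⟹ F of L ⊣ F is a natural isomorphism if and only if the whiskered unit F η' : F ⟹ F R F of F ⊣ R is a natural isomorphism. -/
open CategoryTheory

universe v1 v2 u1 u2

section Aux

variable {M : Type u1} {N : Type u2} [Category.{v1} M] [Category.{v2} N]
variable (F : N ⥤ M) (L R : M ⥤ N) (adj1 : L ⊣ F) (adj2 : F ⊣ R)

lemma unit_app_F_isIso (h1 : ∀ Y : N, IsIso (F.map (adj1.counit.app Y))) (Y : N) :
    IsIso (adj1.unit.app (F.obj Y)) := by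
  have := h1 Y
  have h : adj1.unit.app (F.obj Y) = inv (F.map (adj1.counit.app Y)) :=
    IsIso.eq_inv_of_inv_hom_id (adj1.right_triangle_components Y)
  rw [h]; infer_instance

lemma counit_app_F_isIso (h2 : ∀ Y : N, IsIso (F.map (adj2.unit.app Y))) (Y : N) :
    IsIso (adj2.counit.app (F.obj Y)) := by
  have := h2 Y
  have h : adj2.counit.app (F.obj Y) = inv (F.map (adj2.unit.app Y)) :=
    IsIso.eq_inv_of_hom_inv_id (adj2.left_triangle_components Y)
  rw [h]; infer_instance

lemma aux1 (h1 : ∀ Y : N, IsIso (F.map (adj1.counit.app Y)))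
    {B : M} {Z : N} (b : F.obj (L.obj B) ⟶ F.obj Z) :
    F.map (L.map b) ≫ F.map (adj1.counit.app Z)
      = F.map (adj1.counit.app (L.obj B)) ≫ b := by
  have hη := unit_app_F_isIso F L adj1 h1 (L.obj B)
  rw [← cancel_epi (adj1.unit.app (F.obj (L.obj B)))]
  have hnat := adj1.unit.naturality b
  simp only [Functor.id_map, Functor.comp_map] at hnat
  rw [reassoc_of% hnat.symm, adj1.right_triangle_components Z, Category.comp_id,
    reassoc_of% (adj1.right_triangle_components (L.obj B))]

lemma aux2 (h2 : ∀ Y : N, IsIso (F.map (adj2.unit.app Y)))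
    {B : M} {Z : N} (b : F.obj Z ⟶ F.obj (R.obj B)) :
    F.map (adj2.unit.app Z) ≫ F.map (R.map b)
      = b ≫ F.map (adj2.unit.app (R.obj B)) := by
  have hε := counit_app_F_isIso F R adj2 h2 (R.obj B)
  rw [← cancel_mono (adj2.counit.app (F.obj (R.obj B)))]
  have hnat := adj2.counit.naturality b
  simp only [Functor.id_map, Functor.comp_map] at hnat
  rw [Category.assoc, Category.assoc, hnat, reassoc_of% (adj2.left_triangle_components Z),
    adj2.left_triangle_components (R.obj B), Category.comp_id]

lemma key1 (h1 : ∀ Y : N, IsIso (F.map (adj1.counit.app Y))) (X : N) :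
    adj2.counit.app (F.obj X) ≫ F.map (adj2.unit.app X)
      = 𝟙 (F.obj (R.obj (F.obj X))) := by
  have hFg :
      F.map (L.map (adj1.unit.app (F.obj (R.obj (F.obj X))))
        ≫ L.map (F.map (adj1.counit.app (R.obj (F.obj X))) ≫ adj2.counit.app (F.obj X))
        ≫ adj1.counit.app X)
      = F.map (adj1.counit.app (R.obj (F.obj X))) ≫ adj2.counit.app (F.obj X) := by
    rw [Functor.map_comp, Functor.map_comp,
      aux1 F L adj1 h1 (F.map (adj1.counit.app (R.obj (F.obj X))) ≫ adj2.counit.app (F.obj X)),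
      ← Category.assoc, ← Functor.map_comp]
    erw [adj1.left_triangle_components]
    simp
  set g : L.obj (F.obj (R.obj (F.obj X))) ⟶ X :=
    L.map (adj1.unit.app (F.obj (R.obj (F.obj X))))
      ≫ L.map (F.map (adj1.counit.app (R.obj (F.obj X))) ≫ adj2.counit.app (F.obj X))
      ≫ adj1.counit.app X with hg
  have hnatg : g ≫ adj2.unit.app X
      = adj2.unit.app (L.obj (F.obj (R.obj (F.obj X)))) ≫ R.map (F.map g) := by
    have := adj2.unit.naturality g
    simp only [Functor.id_map, Functor.comp_map, Functor.comp_obj, Functor.id_obj] at this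
    exact this
  have hnat2 : adj2.unit.app (L.obj (F.obj (R.obj (F.obj X))))
        ≫ R.map (F.map (adj1.counit.app (R.obj (F.obj X))))
      = adj1.counit.app (R.obj (F.obj X)) ≫ adj2.unit.app (R.obj (F.obj X)) := by
    have := adj2.unit.naturality (adj1.counit.app (R.obj (F.obj X)))
    simp only [Functor.id_map, Functor.comp_map, Functor.comp_obj, Functor.id_obj] at this
    exact this.symm
  calc adj2.counit.app (F.obj X) ≫ F.map (adj2.unit.app X)
      = (adj1.unit.app (F.obj (R.obj (F.obj X))) ≫ F.map (adj1.counit.app (R.obj (F.obj X)))) ≫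
          adj2.counit.app (F.obj X) ≫ F.map (adj2.unit.app X) := by
        rw [adj1.right_triangle_components]; simp
    _ = adj1.unit.app (F.obj (R.obj (F.obj X))) ≫ F.map (g ≫ adj2.unit.app X) := by
        rw [Functor.map_comp, hFg]
        simp only [Category.assoc]
    _ = adj1.unit.app (F.obj (R.obj (F.obj X))) ≫
          F.map (adj2.unit.app (L.obj (F.obj (R.obj (F.obj X))))) ≫ F.map (R.map (F.map g)) := by
        rw [hnatg, Functor.map_comp]
    _ = adj1.unit.app (F.obj (R.obj (F.obj X))) ≫
          (F.map (adj2.unit.app (L.obj (F.obj (R.obj (F.obj X)))))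
            ≫ F.map (R.map (F.map (adj1.counit.app (R.obj (F.obj X))))))
          ≫ F.map (R.map (adj2.counit.app (F.obj X))) := by
        rw [hFg]
        simp only [Functor.map_comp, Category.assoc]
    _ = adj1.unit.app (F.obj (R.obj (F.obj X))) ≫
          F.map (adj1.counit.app (R.obj (F.obj X)) ≫ adj2.unit.app (R.obj (F.obj X)))
          ≫ F.map (R.map (adj2.counit.app (F.obj X))) := by
        rw [← Functor.map_comp, hnat2]
    _ = (adj1.unit.app (F.obj (R.obj (F.obj X))) ≫ F.map (adj1.counit.app (R.obj (F.obj X)))) ≫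
          F.map (adj2.unit.app (R.obj (F.obj X)) ≫ R.map (adj2.counit.app (F.obj X))) := by
        simp only [Functor.map_comp, Category.assoc]
    _ = 𝟙 _ := by
        rw [adj1.right_triangle_components, adj2.right_triangle_components]
        simp

lemma key2 (h2 : ∀ Y : N, IsIso (F.map (adj2.unit.app Y))) (X : N) :
    F.map (adj1.counit.app X) ≫ adj1.unit.app (F.obj X)
      = 𝟙 (F.obj (L.obj (F.obj X))) := by
  have hFg :
      F.map (adj2.unit.app X
        ≫ R.map (adj1.unit.app (F.obj X) ≫ F.map (adj2.unit.app (L.obj (F.obj X))))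
        ≫ R.map (adj2.counit.app (F.obj (L.obj (F.obj X)))))
      = adj1.unit.app (F.obj X) ≫ F.map (adj2.unit.app (L.obj (F.obj X))) := by
    rw [Functor.map_comp, Functor.map_comp,
      ← Category.assoc,
      aux2 F R adj2 h2 (adj1.unit.app (F.obj X) ≫ F.map (adj2.unit.app (L.obj (F.obj X)))),
      Category.assoc, ← Functor.map_comp, adj2.right_triangle_components]
    simp
  set g : X ⟶ R.obj (F.obj (L.obj (F.obj X))) :=
    adj2.unit.app X
      ≫ R.map (adj1.unit.app (F.obj X) ≫ F.map (adj2.unit.app (L.obj (F.obj X))))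
      ≫ R.map (adj2.counit.app (F.obj (L.obj (F.obj X)))) with hg
  have hnatg : adj1.counit.app X ≫ g
      = L.map (F.map g) ≫ adj1.counit.app (R.obj (F.obj (L.obj (F.obj X)))) := by
    have := adj1.counit.naturality g
    simp only [Functor.id_map, Functor.comp_map, Functor.comp_obj, Functor.id_obj] at this
    exact this.symm
  have hnat2 : F.map (L.map (F.map (adj2.unit.app (L.obj (F.obj X)))))
        ≫ F.map (adj1.counit.app (R.obj (F.obj (L.obj (F.obj X)))))
      = F.map (adj1.counit.app (L.obj (F.obj X))) ≫ F.map (adj2.unit.app (L.obj (F.obj X))) := by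
    have := adj1.counit.naturality (adj2.unit.app (L.obj (F.obj X)))
    simp only [Functor.id_map, Functor.comp_map, Functor.comp_obj, Functor.id_obj] at this
    rw [← Functor.map_comp, ← Functor.map_comp, this]
  have lt' : F.map (L.map (adj1.unit.app (F.obj X)))
        ≫ F.map (adj1.counit.app (L.obj (F.obj X))) = 𝟙 _ := by
    rw [← Functor.map_comp]
    erw [adj1.left_triangle_components]
    simp
  calc F.map (adj1.counit.app X) ≫ adj1.unit.app (F.obj X)
      = (F.map (adj1.counit.app X) ≫ adj1.unit.app (F.obj X)
          ≫ F.map (adj2.unit.app (L.obj (F.obj X))))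
          ≫ adj2.counit.app (F.obj (L.obj (F.obj X))) := by
        rw [Category.assoc, Category.assoc, adj2.left_triangle_components]
        simp
    _ = F.map (adj1.counit.app X ≫ g) ≫ adj2.counit.app (F.obj (L.obj (F.obj X))) := by
        rw [Functor.map_comp, hFg]
    _ = F.map (L.map (F.map g))
          ≫ F.map (adj1.counit.app (R.obj (F.obj (L.obj (F.obj X)))))
          ≫ adj2.counit.app (F.obj (L.obj (F.obj X))) := by
        rw [hnatg, Functor.map_comp]
        simp only [Category.assoc]
    _ = F.map (L.map (adj1.unit.app (F.obj X)))
          ≫ F.map (L.map (F.map (adj2.unit.app (L.obj (F.obj X)))))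
          ≫ F.map (adj1.counit.app (R.obj (F.obj (L.obj (F.obj X)))))
          ≫ adj2.counit.app (F.obj (L.obj (F.obj X))) := by
        rw [hFg]
        simp only [Functor.map_comp, Category.assoc]
    _ = F.map (L.map (adj1.unit.app (F.obj X)))
          ≫ F.map (adj1.counit.app (L.obj (F.obj X)))
          ≫ F.map (adj2.unit.app (L.obj (F.obj X)))
          ≫ adj2.counit.app (F.obj (L.obj (F.obj X))) := by
        rw [reassoc_of% hnat2]
    _ = F.map (adj2.unit.app (L.obj (F.obj X)))
          ≫ adj2.counit.app (F.obj (L.obj (F.obj X))) := by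
        rw [reassoc_of% lt']
    _ = 𝟙 _ := adj2.left_triangle_components (L.obj (F.obj X))

end Aux

/-- The whiskered counit F ε : F L F ⟹ F of L ⊣ F is a natural
isomorphism iff the whiskered unit F η' : F ⟹ F R F of F ⊣ R is. -/
theorem whiskered_counit_isIso_iff_whiskered_unit_isIso {M : Type u1} {N : Type u2}
    [Category.{v1} M] [Category.{v2} N]
    (F : N ⥤ M) (L R : M ⥤ N) (adj1 : L ⊣ F) (adj2 : F ⊣ R) :
    IsIso (Functor.whiskerRight adj1.counit F) ↔ IsIso (Functor.whiskerRight adj2.unit F) := by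
  constructor
  · intro hyp
    have h1 : ∀ Y : N, IsIso (F.map (adj1.counit.app Y)) := fun Y => by
      have : IsIso ((Functor.whiskerRight adj1.counit F).app Y) := inferInstance
      simpa using this
    have : ∀ X : N, IsIso ((Functor.whiskerRight adj2.unit F).app X) := fun X => by
      refine ⟨⟨adj2.counit.app (F.obj X), ?_, ?_⟩⟩
      · simpa using adj2.left_triangle_components X
      · simpa using key1 F L R adj1 adj2 h1 X
    exact NatIso.isIso_of_isIso_app _
  · intro hyp
    have h2 : ∀ Y : N, IsIso (F.map (adj2.unit.app Y)) := fun Y => by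
      have : IsIso ((Functor.whiskerRight adj2.unit F).app Y) := inferInstance
      simpa using this
    have : ∀ X : N, IsIso ((Functor.whiskerRight adj1.counit F).app X) := fun X => by
      refine ⟨⟨adj1.unit.app (F.obj X), ?_, ?_⟩⟩
      · simpa using key2 F L R adj1 adj2 h2 X
      · simpa using adj1.right_triangle_components X
    exact NatIso.isIso_of_isIso_app _
end
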